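/- Let k > l ≥ 1 and n ≥ k - 1 + 2l. The graph G = K_{k-1} + K_{⌊(n-k+1)/2⌋, ⌈(n-k+1)/2⌉} (join of a clique on k-1 vertices with a balanced complete bipartite graph) contains no k pairwise vertex-disjoint triangles, and the number of copies of lK_3 (l pairwise vertex-disjoint triangles) in G is at least C(k-1, l) · (1/l!) · ∏_{i=0}^{l-1} ⌊(n-k+1-2i)²/4⌋. -/

import Mathlib

open SimpleGraph

universe u v

/-- An (injective) copy of the graph `F` inside the graph `G`. -/
structure GraphCopy {α : Type u} {β : Type v} (F : SimpleGraph α) (G : SimpleGraph β) where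
  toFun : α → β
  inj : Function.Injective toFun
  adj : ∀ {a b : α}, F.Adj a b → G.Adj (toFun a) (toFun b)

/-- `G` contains a copy of `F` (i.e. a subgraph isomorphic to `F`). -/
def Contains {α : Type u} {β : Type v} (F : SimpleGraph α) (G : SimpleGraph β) : Prop :=
  Nonempty (GraphCopy F G)

/-- `G` contains `k` pairwise vertex-disjoint copies of `F`. -/
def HasDisjCopies {α : Type u} {β : Type v} (F : SimpleGraph α) (G : SimpleGraph β)
    (k : ℕ) : Prop :=
  ∃ c : Fin k → GraphCopy F G,
    ∀ i j : Fin k, i ≠ j → Disjoint (Set.range (c i).toFun) (Set.range (c j).toFun)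

/-- The join of two graphs: their disjoint union together with all cross edges. -/
def gJoin {α : Type u} {β : Type v} (G : SimpleGraph α) (H : SimpleGraph β) :
    SimpleGraph (α ⊕ β) where
  Adj x y :=
    match x, y with
    | Sum.inl a, Sum.inl b => G.Adj a b
    | Sum.inr a, Sum.inr b => H.Adj a b
    | _, _ => True
  symm := ⟨by rintro (a | a) (b | b) h <;> first | exact h.symm | trivial⟩
  loopless := ⟨by rintro (a | a) h; exacts [G.ne_of_adj h rfl, H.ne_of_adj h rfl]⟩

/-- The Turán number: maximum number of edges of an `n`-vertex `F`-free graph. -/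
noncomputable def exNum {α : Type u} (n : ℕ) (F : SimpleGraph α) : ℕ :=
  sSup {m : ℕ | ∃ G : SimpleGraph (Fin n), ¬ Contains F G ∧ m = G.edgeSet.ncard}

/-- The number of (unlabeled) copies of `H` in `G`, i.e. the number of subgraphs of `G`
isomorphic to `H`. -/
noncomputable def copyCount {α : Type u} {β : Type v} (H : SimpleGraph α)
    (G : SimpleGraph β) : ℕ :=
  {A : G.Subgraph | Nonempty (H ≃g A.coe)}.ncard

/-- The generalized Turán number: maximum number of copies of `H` in an
`n`-vertex `F`-free graph. -/
noncomputable def exGen {α : Type u} {γ : Type v} (n : ℕ) (H : SimpleGraph α)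
    (F : SimpleGraph γ) : ℕ :=
  sSup {m : ℕ | ∃ G : SimpleGraph (Fin n), ¬ Contains F G ∧ m = copyCount H G}

/-- `s` is a matching in `G`: a set of edges of `G`, pairwise vertex-disjoint. -/
def IsMatchingSet {V : Type u} (G : SimpleGraph V) (s : Finset (Sym2 V)) : Prop :=
  ↑s ⊆ G.edgeSet ∧ ∀ e ∈ s, ∀ f ∈ s, e ≠ f → ∀ x : V, x ∈ e → x ∉ f

/-- The number of matchings of size `l` in `G`. -/
noncomputable def matchCount {V : Type u} (G : SimpleGraph V) (l : ℕ) : ℕ :=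
  {s : Finset (Sym2 V) | s.card = l ∧ IsMatchingSet G s}.ncard

/-- `G` contains `k` pairwise vertex-disjoint triangles. -/
def HasDisjTriangles {V : Type u} (G : SimpleGraph V) (k : ℕ) : Prop :=
  ∃ S : Finset (Finset V), S.card = k ∧ (∀ T ∈ S, G.IsNClique 3 T) ∧
    (S : Set (Finset V)).Pairwise fun T T' => Disjoint T T'

/-- The number of copies of `lK₃` (families of `l` pairwise disjoint triangles) in `G`. -/
noncomputable def disjTriFamCount {V : Type u} (G : SimpleGraph V) (l : ℕ) : ℕ :=
  {S : Finset (Finset V) | S.card = l ∧ (∀ T ∈ S, G.IsNClique 3 T) ∧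
    (S : Set (Finset V)).Pairwise fun T T' => Disjoint T T'}.ncard

/-- The graph `K_{k-1} + K_{⌊(n-k+1)/2⌋, ⌈(n-k+1)/2⌉}`. -/
def joinGraph19 (k n : ℕ) :
    SimpleGraph (Fin (k - 1) ⊕ (Fin ((n - k + 1) / 2) ⊕ Fin ((n - k + 1) - (n - k + 1) / 2))) :=
  gJoin (⊤ : SimpleGraph (Fin (k - 1)))
    (completeBipartiteGraph (Fin ((n - k + 1) / 2)) (Fin ((n - k + 1) - (n - k + 1) / 2)))


section Stmt19Aux

variable {K a b : ℕ}

/-- Shorthand for the join of a clique and a complete bipartite graph. -/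
abbrev JG19 (K a b : ℕ) : SimpleGraph (Fin K ⊕ (Fin a ⊕ Fin b)) :=
  gJoin (⊤ : SimpleGraph (Fin K)) (completeBipartiteGraph (Fin a) (Fin b))

lemma noKtri19 (K a b k : ℕ) (hk : K < k) :
    ¬ ∃ S : Finset (Finset (Fin K ⊕ (Fin a ⊕ Fin b))), S.card = k ∧
      (∀ T ∈ S, (JG19 K a b).IsNClique 3 T) ∧
      (S : Set (Finset (Fin K ⊕ (Fin a ⊕ Fin b)))).Pairwise fun T T' => Disjoint T T' := by
  rintro ⟨S, hcard, hclique, hdisj⟩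
  have key : ∀ T ∈ S, ∃ x : Fin K, Sum.inl x ∈ T := by
    intro T hT
    obtain ⟨hc, hcard3⟩ := hclique T hT
    by_contra h
    push_neg at h
    obtain ⟨u, v, w, huv, huw, hvw, hT3⟩ := Finset.card_eq_three.mp hcard3
    have hu : u ∈ T := by rw [hT3]; simp
    have hv : v ∈ T := by rw [hT3]; simp
    have hw : w ∈ T := by rw [hT3]; simp
    obtain ⟨u', rfl⟩ : ∃ u', u = Sum.inr u' := by
      rcases u with x | u'
      · exact absurd hu (h x)
      · exact ⟨u', rfl⟩
    obtain ⟨v', rfl⟩ : ∃ v', v = Sum.inr v' := by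
      rcases v with x | v'
      · exact absurd hv (h x)
      · exact ⟨v', rfl⟩
    obtain ⟨w', rfl⟩ : ∃ w', w = Sum.inr w' := by
      rcases w with x | w'
      · exact absurd hw (h x)
      · exact ⟨w', rfl⟩
    have h1 := hc hu hv huv
    have h2 := hc hu hw huw
    have h3 := hc hv hw hvw
    rcases u' with x | x <;> rcases v' with y | y <;> rcases w' with z | z <;>
      simp [gJoin] at h1 h2 h3
  choose f hf using key
  have hinj : Set.InjOn (fun T : {T // T ∈ S} => f T.1 T.2) Set.univ := by
    rintro ⟨T₁, h₁⟩ - ⟨T₂, h₂⟩ - h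
    simp only at h
    by_contra hne
    have hTne : T₁ ≠ T₂ := fun e => hne (by subst e; rfl)
    have := hdisj h₁ h₂ hTne
    exact (Finset.disjoint_left.mp this (hf T₁ h₁)) (h ▸ hf T₂ h₂)
  have hle : S.card ≤ K := by
    have := Fintype.card_le_of_injective (fun T : {T // T ∈ S} => f T.1 T.2)
      (fun x y h => hinj (Set.mem_univ x) (Set.mem_univ y) h)
    simpa [Fintype.card_coe] using this
  omega

def tri19 (c : Fin K) (p : Fin a) (q : Fin b) : Finset (Fin K ⊕ (Fin a ⊕ Fin b)) :=
  {Sum.inl c, Sum.inr (Sum.inl p), Sum.inr (Sum.inr q)}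

lemma tri19_card (c : Fin K) (p : Fin a) (q : Fin b) : (tri19 c p q).card = 3 := by
  rw [tri19, Finset.card_insert_of_notMem (by simp), Finset.card_insert_of_notMem (by simp),
    Finset.card_singleton]

lemma tri19_clique (c : Fin K) (p : Fin a) (q : Fin b) :
    (JG19 K a b).IsNClique 3 (tri19 c p q) := by
  constructor
  · intro u hu v hv hne
    simp only [tri19, Finset.coe_insert, Set.mem_insert_iff, Finset.coe_singleton,
      Set.mem_singleton_iff] at hu hv
    rcases hu with rfl | rfl | rfl <;> rcases hv with rfl | rfl | rfl <;>
      first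
        | exact absurd rfl hne
        | simp [gJoin]
  · exact tri19_card c p q

lemma tri19_inj {c c' : Fin K} {p p' : Fin a} {q q' : Fin b}
    (h : tri19 c p q = tri19 c' p' q') : c = c' ∧ p = p' ∧ q = q' := by
  have h1 : (Sum.inl c : Fin K ⊕ (Fin a ⊕ Fin b)) ∈ tri19 c' p' q' := by
    rw [← h]; simp [tri19]
  have h2 : (Sum.inr (Sum.inl p) : Fin K ⊕ (Fin a ⊕ Fin b)) ∈ tri19 c' p' q' := by
    rw [← h]; simp [tri19]
  have h3 : (Sum.inr (Sum.inr q) : Fin K ⊕ (Fin a ⊕ Fin b)) ∈ tri19 c' p' q' := by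
    rw [← h]; simp [tri19]
  simp [tri19] at h1 h2 h3
  exact ⟨h1, h2, h3⟩

lemma tri19_disj {c c' : Fin K} {p p' : Fin a} {q q' : Fin b}
    (hc : c ≠ c') (hp : p ≠ p') (hq : q ≠ q') : Disjoint (tri19 c p q) (tri19 c' p' q') := by
  rw [Finset.disjoint_left]
  intro v hv hv'
  simp [tri19] at hv hv'
  rcases hv with rfl | rfl | rfl <;> simp_all [tri19]

lemma countLB19 (K a b l : ℕ) :
    K.choose l * (a.descFactorial l * b.descFactorial l) ≤
    {S : Finset (Finset (Fin K ⊕ (Fin a ⊕ Fin b))) | S.card = l ∧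
      (∀ T ∈ S, (JG19 K a b).IsNClique 3 T) ∧
      (S : Set (Finset (Fin K ⊕ (Fin a ⊕ Fin b)))).Pairwise
        fun T T' => Disjoint T T'}.ncard := by
  classical
  set 𝒮 := {S : Finset (Finset (Fin K ⊕ (Fin a ⊕ Fin b))) | S.card = l ∧
      (∀ T ∈ S, (JG19 K a b).IsNClique 3 T) ∧
      (S : Set (Finset (Fin K ⊕ (Fin a ⊕ Fin b)))).Pairwise
        fun T T' => Disjoint T T'} with h𝒮
  let D := {A : Finset (Fin K) // A.card = l} × ((Fin l ↪ Fin a) × (Fin l ↪ Fin b))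
  let cfun : {A : Finset (Fin K) // A.card = l} → Fin l → Fin K :=
    fun A i => (A.1.orderIsoOfFin A.2 i : Fin K)
  have cfun_inj : ∀ A, Function.Injective (cfun A) := by
    intro A i j h
    exact (A.1.orderIsoOfFin A.2).injective (Subtype.ext h)
  have cfun_mem : ∀ A i, cfun A i ∈ A.1 := fun A i => (A.1.orderIsoOfFin A.2 i).2
  have cfun_surj : ∀ A z, z ∈ A.1 → ∃ i, cfun A i = z := by
    intro A z hz
    obtain ⟨i, hi⟩ := (A.1.orderIsoOfFin A.2).surjective ⟨z, hz⟩
    exact ⟨i, congrArg Subtype.val hi⟩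
  let Φ : D → Finset (Finset (Fin K ⊕ (Fin a ⊕ Fin b))) :=
    fun d => Finset.image (fun i => tri19 (cfun d.1 i) (d.2.1 i) (d.2.2 i)) Finset.univ
  have hΦmem : ∀ d, Φ d ∈ 𝒮 := by
    rintro ⟨A, x, y⟩
    refine ⟨?_, ?_, ?_⟩
    · rw [Finset.card_image_of_injective _ ?_, Finset.card_univ, Fintype.card_fin]
      intro i j h
      exact cfun_inj A (tri19_inj h).1
    · intro T hT
      simp only [Φ, Finset.mem_image] at hT
      obtain ⟨i, -, rfl⟩ := hT
      exact tri19_clique _ _ _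
    · intro T hT T' hT' hne
      simp only [Φ, Finset.coe_image, Set.mem_image] at hT hT'
      obtain ⟨i, -, rfl⟩ := hT
      obtain ⟨j, -, rfl⟩ := hT'
      have hij : i ≠ j := fun e => hne (by rw [e])
      exact tri19_disj (fun e => hij (cfun_inj A e)) (fun e => hij (x.injective e))
        (fun e => hij (y.injective e))
  have hΦinj : Function.Injective Φ := by
    rintro ⟨A, x, y⟩ ⟨A', x', y'⟩ h
    simp only [Φ] at h
    have step : ∀ i : Fin l, ∃ j, cfun A i = cfun A' j ∧ x i = x' j ∧ y i = y' j := by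
      intro i
      have : tri19 (cfun A i) (x i) (y i) ∈
          Finset.image (fun j => tri19 (cfun A' j) (x' j) (y' j)) Finset.univ := by
        rw [← h]; exact Finset.mem_image_of_mem _ (Finset.mem_univ i)
      obtain ⟨j, -, hj⟩ := Finset.mem_image.mp this
      obtain ⟨h1, h2, h3⟩ := tri19_inj hj.symm
      exact ⟨j, h1, h2, h3⟩
    have step' : ∀ j : Fin l, ∃ i, cfun A' j = cfun A i ∧ x' j = x i ∧ y' j = y i := by
      intro j
      have : tri19 (cfun A' j) (x' j) (y' j) ∈
          Finset.image (fun i => tri19 (cfun A i) (x i) (y i)) Finset.univ := by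
        rw [h]; exact Finset.mem_image_of_mem _ (Finset.mem_univ j)
      obtain ⟨i, -, hi⟩ := Finset.mem_image.mp this
      obtain ⟨h1, h2, h3⟩ := tri19_inj hi.symm
      exact ⟨i, h1, h2, h3⟩
    have hAA : A.1 = A'.1 := by
      apply Finset.Subset.antisymm
      · intro z hz
        obtain ⟨i, rfl⟩ := cfun_surj A z hz
        obtain ⟨j, hj, -⟩ := step i
        rw [hj]; exact cfun_mem A' j
      · intro z hz
        obtain ⟨j, rfl⟩ := cfun_surj A' z hz
        obtain ⟨i, hi, -⟩ := step' j
        rw [hi]; exact cfun_mem A i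
    obtain ⟨A, hA⟩ := A
    obtain ⟨A', hA'⟩ := A'
    simp only at hAA
    subst hAA
    have hcc : cfun ⟨A, hA⟩ = cfun ⟨A, hA'⟩ := rfl
    have hxy : ∀ i, x i = x' i ∧ y i = y' i := by
      intro i
      obtain ⟨j, h1, h2, h3⟩ := step i
      rw [← hcc] at h1
      have := cfun_inj ⟨A, hA⟩ h1
      subst this
      exact ⟨h2, h3⟩
    have hx : x = x' := DFunLike.ext _ _ fun i => (hxy i).1
    have hy : y = y' := DFunLike.ext _ _ fun i => (hxy i).2
    simp [hx, hy]
  have hcardD : Nat.card D = K.choose l * (a.descFactorial l * b.descFactorial l) := by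
    simp only [D, Nat.card_eq_fintype_card, Fintype.card_prod, Fintype.card_finset_len,
      Fintype.card_embedding_eq, Fintype.card_fin]
  have hle : Nat.card D ≤ Nat.card 𝒮 := by
    have hinj : Function.Injective (fun d : D => (⟨Φ d, hΦmem d⟩ : 𝒮)) := by
      intro d d' h
      exact hΦinj (congrArg Subtype.val h)
    exact Nat.card_le_card_of_injective _ hinj
  rw [hcardD] at hle
  rwa [Nat.card_coe_set_eq] at hle

lemma floorsq19 (m i : ℕ) (h : 2 * i ≤ m) :
    (m - 2 * i) ^ 2 / 4 = (m / 2 - i) * (m - m / 2 - i) := by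
  have hm2 : m - 2 * i = 2 * (m / 2 - i) + m % 2 := by omega
  have hb : m - m / 2 - i = (m / 2 - i) + m % 2 := by omega
  have key : (m - 2 * i) ^ 2 = 4 * ((m / 2 - i) * (m - m / 2 - i)) + m % 2 := by
    rw [hm2, hb]
    rcases Nat.mod_two_eq_zero_or_one m with hr | hr <;> rw [hr] <;> ring
  omega

end Stmt19Aux

/-- `K_{k-1} + K_{⌊(n-k+1)/2⌋,⌈(n-k+1)/2⌉}` has no `k` disjoint
triangles, and contains at least `C(k-1,l)·(1/l!)·∏_{i<l} ⌊(n-k+1-2i)²/4⌋` copies of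
`lK₃`. -/
theorem stmt19 (k l n : ℕ) (hkl : l < k) (hl : 1 ≤ l) (hn : k - 1 + 2 * l ≤ n) :
    ¬ HasDisjTriangles (joinGraph19 k n) k
    ∧ (k - 1).choose l * ∏ i ∈ Finset.range l, (n - k + 1 - 2 * i) ^ 2 / 4 ≤
        disjTriFamCount (joinGraph19 k n) l * l.factorial := by
  have hk2 : 2 ≤ k := by omega
  constructor
  · exact noKtri19 (k - 1) _ _ k (by omega)
  · set m := n - k + 1 with hm
    have hml : 2 * l ≤ m := by omega
    have hprod : ∏ i ∈ Finset.range l, (m - 2 * i) ^ 2 / 4 =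
        (m / 2).descFactorial l * (m - m / 2).descFactorial l := by
      rw [Nat.descFactorial_eq_prod_range, Nat.descFactorial_eq_prod_range,
        ← Finset.prod_mul_distrib]
      refine Finset.prod_congr rfl fun i hi => ?_
      rw [Finset.mem_range] at hi
      exact floorsq19 m i (by omega)
    rw [hprod]
    calc (k - 1).choose l * ((m / 2).descFactorial l * (m - m / 2).descFactorial l)
        ≤ disjTriFamCount (joinGraph19 k n) l := countLB19 (k - 1) (m / 2) (m - m / 2) l
      _ ≤ disjTriFamCount (joinGraph19 k n) l * l.factorial :=
          Nat.le_mul_of_pos_right _ (Nat.factorial_pos l)
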